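/- Let Ω be a countably infinite set and let u, v, f ∈ Ω^Ω. If u is injective, d(u) > 0, d(v) = d(f) = ∞, c(v) < ∞, and c(f) < ∞, then f belongs to the subsemigroup of Ω^Ω generated by S_{1,2,3,4,5} ∪ {u, v}. -/

import Mathlib

/-!
Setting: `Ω` is a countably infinite set, `Function.End Ω = Ω → Ω` is the full
transformation semigroup (a subset is closed under composition in one order iff
it is closed in the other, so the lattice of subsemigroups is unaffected by the
left-to-right convention of the paper).
-/

open Cardinal

/-- A transversal of `f`: a set on which `f` is injective and whose image is all of `Ωf`. -/
def IsTransversal {Ω : Type*} (f : Ω → Ω) (T : Set Ω) : Prop :=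
  Set.InjOn f T ∧ f '' T = Set.range f

/-- The defect `d(f) = |Ω \ Ωf|`. -/
noncomputable def defect {Ω : Type*} (f : Ω → Ω) : Cardinal :=
  #((Set.range f)ᶜ : Set Ω)

/-- The collapse `c(f) = |Ω \ Σ|` for a transversal `Σ` of `f` (the value is
independent of the choice of transversal, so the infimum is the common value). -/
noncomputable def collapse {Ω : Type*} (f : Ω → Ω) : Cardinal :=
  ⨅ T : {T : Set Ω // IsTransversal f T}, #(T.1ᶜ : Set Ω)

/-- The infinite contraction index `k(f) = |{α : αf⁻¹ infinite}|`. -/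
noncomputable def contract {Ω : Type*} (f : Ω → Ω) : Cardinal :=
  #({α : Ω | (f ⁻¹' {α}).Infinite} : Set Ω)

def S1 {Ω : Type*} : Set (Function.End Ω) := {f | collapse f = 0 ∨ 0 < defect f}
def S2 {Ω : Type*} : Set (Function.End Ω) := {f | 0 < collapse f ∨ defect f = 0}
def S3 {Ω : Type*} : Set (Function.End Ω) := {f | collapse f < ℵ₀ ∨ ℵ₀ ≤ defect f}
def S4 {Ω : Type*} : Set (Function.End Ω) := {f | ℵ₀ ≤ collapse f ∨ defect f < ℵ₀}
def S5 {Ω : Type*} : Set (Function.End Ω) := {f | contract f < ℵ₀}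

/-- `Sym(Ω)`, the bijections of `Ω`. -/
def SymOmega {Ω : Type*} : Set (Function.End Ω) := {f | Function.Bijective f}

/-- `U = {f : d(f) = ∞ or 0 < c(f) < ∞} ∪ Sym(Ω)`. -/
def SetU {Ω : Type*} : Set (Function.End Ω) :=
  {f | ℵ₀ ≤ defect f ∨ (0 < collapse f ∧ collapse f < ℵ₀)} ∪ SymOmega

/-- `V = {f : c(f) = ∞ or 0 < d(f) < ∞} ∪ Sym(Ω)`. -/
def SetV {Ω : Type*} : Set (Function.End Ω) :=
  {f | ℵ₀ ≤ collapse f ∨ (0 < defect f ∧ defect f < ℵ₀)} ∪ SymOmega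

/-- `S_{1,2,3,4,5}`. -/
def S12345 {Ω : Type*} : Set (Function.End Ω) := S1 ∩ S2 ∩ S3 ∩ S4 ∩ S5

/-- The family `S_1, …, S_5` indexed by `Fin 5`. -/
def SS {Ω : Type*} : Fin 5 → Set (Function.End Ω) := ![S1, S2, S3, S4, S5]

section Aux

variable {Ω : Type*}

lemma exists_transversal' (f : Ω → Ω) : ∃ T, IsTransversal f T := by
  classical
  refine ⟨Set.range (fun y : Set.range f => Classical.choose y.2), ?_, ?_⟩
  · rintro x ⟨y1, rfl⟩ z ⟨y2, rfl⟩ h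
    have h1 : f (Classical.choose y1.2) = y1 := Classical.choose_spec y1.2
    have h2 : f (Classical.choose y2.2) = y2 := Classical.choose_spec y2.2
    have : y1 = y2 := Subtype.ext (by rw [← h1, ← h2, h])
    rw [this]
  · ext y
    constructor
    · rintro ⟨x, ⟨y1, rfl⟩, rfl⟩
      rw [Classical.choose_spec y1.2]; exact y1.2
    · intro hy
      exact ⟨Classical.choose hy, ⟨⟨y, hy⟩, rfl⟩, Classical.choose_spec hy⟩

instance transversal_nonempty (f : Ω → Ω) : Nonempty {T : Set Ω // IsTransversal f T} :=
  let ⟨T, hT⟩ := exists_transversal' f; ⟨⟨T, hT⟩⟩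

lemma collapse_le' (f : Ω → Ω) {T : Set Ω} (hT : IsTransversal f T) :
    collapse f ≤ #(Tᶜ : Set Ω) :=
  ciInf_le' _ (⟨T, hT⟩ : {T : Set Ω // IsTransversal f T})

lemma exists_transversal_lt (f : Ω → Ω) (h : collapse f < ℵ₀) :
    ∃ T, IsTransversal f T ∧ #(Tᶜ : Set Ω) < ℵ₀ := by
  obtain ⟨⟨T, hT⟩, h2⟩ := exists_lt_of_ciInf_lt h
  exact ⟨T, hT, h2⟩

lemma aleph0_le_collapse (f : Ω → Ω)
    (h : ∀ T : Set Ω, IsTransversal f T → ℵ₀ ≤ #(Tᶜ : Set Ω)) : ℵ₀ ≤ collapse f :=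
  le_ciInf fun T => h T.1 T.2

lemma fiber_finite (f : Ω → Ω) (hc : collapse f < ℵ₀) (α : Ω) : (f ⁻¹' {α}).Finite := by
  obtain ⟨T, hT, hTc⟩ := exists_transversal_lt f hc
  have hTfin : (Tᶜ).Finite := Cardinal.lt_aleph0_iff_set_finite.mp hTc
  have hsub : f ⁻¹' {α} ⊆ Tᶜ ∪ (f ⁻¹' {α} ∩ T) := by
    intro x hx
    by_cases h : x ∈ T
    · exact Or.inr ⟨hx, h⟩
    · exact Or.inl h
  refine Set.Finite.subset (hTfin.union ?_) hsub
  refine Set.Subsingleton.finite ?_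
  rintro a ⟨ha1, ha2⟩ b ⟨hb1, hb2⟩
  exact hT.1 ha2 hb2 (ha1.trans hb1.symm)

lemma bij_mem_S12345 (b : Function.End Ω) (hb : Function.Bijective b) : b ∈ S12345 := by
  have hTu : IsTransversal b Set.univ := ⟨hb.1.injOn, by exact Set.image_univ⟩
  have hc : collapse b = 0 := by
    refine le_antisymm ?_ zero_le
    refine le_trans (collapse_le' b hTu) ?_
    rw [Set.compl_univ]; simp
  have hd : defect b = 0 := by
    show #((Set.range b)ᶜ : Set Ω) = 0; rw [Set.range_eq_univ.mpr hb.2, Set.compl_univ]; simp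
  have hk : contract b < ℵ₀ := by
    have hempty : {α : Ω | (b ⁻¹' {α}).Infinite} = ∅ := by
      ext α
      simp only [Set.mem_setOf_eq, Set.mem_empty_iff_false, iff_false, Set.not_infinite]
      refine Set.Subsingleton.finite ?_
      intro x hx y hy
      exact hb.1 (hx.trans hy.symm)
    have : contract b = 0 := by show #({α : Ω | (b ⁻¹' {α}).Infinite} : Set Ω) = 0; rw [hempty]; simp
    rw [this]; exact aleph0_pos
  refine ⟨⟨⟨⟨Or.inl hc, Or.inr hd⟩, Or.inl ?_⟩, Or.inr ?_⟩, hk⟩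
  · rw [hc]; exact aleph0_pos
  · rw [hd]; exact aleph0_pos

lemma lemA (S' : Set (Function.End Ω)) (u : Function.End Ω) (huS : u ∈ S')
    (hui : Function.Injective u) (hdu : 0 < defect u) (n : ℕ) :
    ∃ h ∈ Subsemigroup.closure S', Function.Injective h ∧
      (n : Cardinal) ≤ #((Set.range h)ᶜ : Set Ω) := by
  induction n with
  | zero => exact ⟨u, Subsemigroup.subset_closure huS, hui, by simp⟩
  | succ n ih =>
    obtain ⟨h, hm, hi, hc⟩ := ih
    obtain ⟨⟨α, hα⟩⟩ := Cardinal.mk_ne_zero_iff.mp hdu.ne'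
    refine ⟨h * u, mul_mem hm (Subsemigroup.subset_closure huS), hi.comp hui, ?_⟩
    have hmem : h α ∉ ((Set.range h)ᶜ : Set Ω) := fun hmem => hmem ⟨α, rfl⟩
    have hsub : insert (h α) ((Set.range h)ᶜ) ⊆ (Set.range (h * u))ᶜ := by
      rintro x (rfl | hx)
      · rintro ⟨y, hy⟩
        exact hα ⟨y, hi hy⟩
      · rintro ⟨y, hy⟩
        exact hx ⟨u y, hy⟩
    calc ((n + 1 : ℕ) : Cardinal) = (n : Cardinal) + 1 := by push_cast; ring
      _ ≤ #((Set.range h)ᶜ : Set Ω) + 1 := add_le_add_left hc 1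
      _ = #(insert (h α) ((Set.range h)ᶜ) : Set Ω) := (Cardinal.mk_insert hmem).symm
      _ ≤ _ := Cardinal.mk_le_mk_of_subset hsub

end Aux

theorem stmt6 (Ω : Type) [Countable Ω] [Infinite Ω] (u v f : Function.End Ω)
    (hu : Function.Injective u) (hdu : 0 < defect u)
    (hdv : ℵ₀ ≤ defect v) (hdf : ℵ₀ ≤ defect f)
    (hcv : collapse v < ℵ₀) (hcf : collapse f < ℵ₀) :
    f ∈ Subsemigroup.closure (S12345 ∪ {u, v}) := by
  classical
  set S' : Set (Function.End Ω) := S12345 ∪ {u, v} with hS'def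
  have huS : u ∈ S' := Set.mem_union_right _ (Set.mem_insert u {v})
  have hvS : v ∈ S' := Set.mem_union_right _ (Set.mem_insert_of_mem _ rfl)
  have hbijS : ∀ b : Function.End Ω, Function.Bijective b → b ∈ S' :=
    fun b hb => Set.mem_union_left _ (bij_mem_S12345 b hb)
  -- transversal of v with finite complement
  obtain ⟨T, hT, hTc⟩ := exists_transversal_lt v hcv
  obtain ⟨nv, hnv⟩ := Cardinal.lt_aleph0.mp hTc
  -- injective map with defect at least nv in the closure
  obtain ⟨h0, hh0S, hh0i, hh0c⟩ := lemA S' u huS hu hdu nv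
  have hle : #(Tᶜ : Set Ω) ≤ #((Set.range h0)ᶜ : Set Ω) := by rw [hnv]; exact hh0c
  obtain ⟨e⟩ := (Cardinal.le_def _ _).mp hle
  -- build a permutation σ mapping range h0 into T
  set j : (Tᶜ : Set Ω) → Ω := fun b => (e b : Ω) with hj
  have hjinj : Function.Injective j := fun a b h => e.injective (Subtype.coe_injective h)
  set B' : Set Ω := Set.range j with hB'
  have hB'A : B' ⊆ (Set.range h0)ᶜ := by rintro x ⟨b, rfl⟩; exact (e b).2
  have hBfin : (Tᶜ : Set Ω).Finite := Cardinal.lt_aleph0_iff_set_finite.mp hTc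
  haveI : Finite (Tᶜ : Set Ω) := hBfin.to_subtype
  have hB'fin : B'.Finite := Set.finite_range j
  haveI : Infinite ↥(B'ᶜ) := Set.infinite_coe_iff.mpr hB'fin.infinite_compl
  haveI : Infinite ↥(Tᶜᶜ : Set Ω) := Set.infinite_coe_iff.mpr hBfin.infinite_compl
  have hcards : #(↥(B'ᶜ)) = #(↥(Tᶜᶜ : Set Ω)) := by
    rw [Cardinal.mk_eq_aleph0, Cardinal.mk_eq_aleph0]
  obtain ⟨ε2⟩ := Cardinal.eq.mp hcards
  set ε1 : (Tᶜ : Set Ω) ≃ ↥B' := Equiv.ofInjective j hjinj with hε1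
  set σ : Ω ≃ Ω :=
    (Equiv.Set.sumCompl B').symm.trans ((ε1.symm.sumCongr ε2).trans
      (Equiv.Set.sumCompl (Tᶜ : Set Ω))) with hσdef
  have hσ : ∀ x : Ω, x ∉ B' → σ x ∈ (Tᶜᶜ : Set Ω) := by
    intro x hx
    show (Equiv.Set.sumCompl (Tᶜ : Set Ω))
      ((ε1.symm.sumCongr ε2) ((Equiv.Set.sumCompl B').symm x)) ∈ (Tᶜᶜ : Set Ω)
    rw [Equiv.Set.sumCompl_symm_apply_of_notMem hx]
    rw [Equiv.sumCongr_apply, Sum.map_inr]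
    rw [Equiv.Set.sumCompl_apply_inr]
    exact (ε2 ⟨x, hx⟩).2
  set σf : Function.End Ω := ⇑σ with hσf
  -- g = v ∘ σ ∘ h0 : injective, in the closure, range inside range v
  set g : Function.End Ω := fun x => v (σ (h0 x)) with hgdef
  have hrgT : ∀ x, σ (h0 x) ∈ T := by
    intro x
    have h1 : h0 x ∉ B' := fun h => (hB'A h) (Set.mem_range_self x)
    have h2 := hσ _ h1
    rwa [compl_compl] at h2
  have hginj : Function.Injective g := by
    intro x y hxy
    exact hh0i (σ.injective (hT.1 (hrgT x) (hrgT y) hxy))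
  have hgS : g ∈ Subsemigroup.closure S' := by
    have : g = v * (σf * h0) := rfl
    rw [this]
    exact mul_mem (Subsemigroup.subset_closure hvS)
      (mul_mem (Subsemigroup.subset_closure (hbijS σf σ.bijective)) hh0S)
  have hrange_gv : Set.range g ⊆ Set.range v := by rintro x ⟨a, rfl⟩; exact ⟨_, rfl⟩
  -- C = complement of range g is infinite
  set C : Set Ω := (Set.range g)ᶜ with hC
  haveI hCinf : Infinite ↥C := by
    have : ℵ₀ ≤ #↥C :=
      le_trans hdv (Cardinal.mk_le_mk_of_subset (Set.compl_subset_compl.mpr hrange_gv))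
    exact Cardinal.aleph0_le_mk_iff.mp this
  obtain ⟨eqC⟩ : Nonempty (↥C ≃ ℕ) :=
    Cardinal.eq.mp (by rw [Cardinal.mk_eq_aleph0, Cardinal.mk_nat])
  -- D = complement of range f is infinite
  set D : Set Ω := (Set.range f)ᶜ with hD
  haveI hDinf : Infinite ↥D := Cardinal.aleph0_le_mk_iff.mp hdf
  obtain ⟨eqD⟩ : Nonempty (ℕ ≃ ↥D) :=
    Cardinal.eq.mp (by rw [Cardinal.mk_nat, Cardinal.mk_eq_aleph0])
  set fW : ℕ → Ω := fun n => (eqD (2*n) : Ω) with hfW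
  have hfWinj : Function.Injective fW := by
    intro a b h
    have := eqD.injective (Subtype.coe_injective h)
    omega
  -- the map p with p ∘ g = f
  set q : Ω → Ω := fun x => if hx : x ∈ C then fW (eqC ⟨x, hx⟩ / 2) else x with hq
  set p : Function.End Ω := Function.extend g f q with hp
  have hpg : ∀ a, p (g a) = f a := fun a => hginj.extend_apply f q a
  have hpC : ∀ x (hx : x ∈ C), p x = fW (eqC ⟨x, hx⟩ / 2) := by
    intro x hx
    have hnx : ¬ ∃ a, g a = x := fun ⟨a, ha⟩ => hx ⟨a, ha⟩
    rw [hp, Function.extend_apply' f q x hnx, hq]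
    exact dif_pos hx
  have hpair : ∀ (m k : ℕ), k / 2 = m → p ((eqC.symm k : Ω)) = fW m := by
    intro m k hk
    rw [hpC _ (eqC.symm k).2]
    congr 1
    rw [Subtype.coe_eta, Equiv.apply_symm_apply]
    exact hk
  -- range of p
  have hrangep : Set.range p ⊆ Set.range f ∪ Set.range fW := by
    rintro x ⟨y, rfl⟩
    by_cases hy : ∃ a, g a = y
    · obtain ⟨a, rfl⟩ := hy
      rw [hpg]
      exact Or.inl ⟨a, rfl⟩
    · have hyC : y ∈ C := hy
      rw [hpC y hyC]
      exact Or.inr ⟨_, rfl⟩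
  -- defect p is infinite
  have hdp : ℵ₀ ≤ defect p := by
    have hinj' : Function.Injective (fun n => (eqD (2*n+1) : Ω)) := by
      intro a b h
      have := eqD.injective (Subtype.coe_injective h)
      omega
    have hsub : Set.range (fun n => (eqD (2*n+1) : Ω)) ⊆ (Set.range p)ᶜ := by
      rintro x ⟨n, rfl⟩ hxmem
      rcases hrangep hxmem with h | h
      · exact (eqD (2*n+1)).2 h
      · obtain ⟨m, hm⟩ := h
        have := eqD.injective (Subtype.coe_injective hm)
        omega
    calc ℵ₀ = #ℕ := Cardinal.mk_nat.symm
      _ = #(Set.range fun n => (eqD (2*n+1) : Ω)) := (Cardinal.mk_range_eq _ hinj').symm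
      _ ≤ _ := Cardinal.mk_le_mk_of_subset hsub
  -- collapse p is infinite
  have hcp : ℵ₀ ≤ collapse p := by
    refine aleph0_le_collapse p ?_
    intro T' hT'
    set idx : ℕ → ℕ := fun m => if ((eqC.symm (2*m) : Ω)) ∈ T' then 2*m+1 else 2*m with hidx
    have hidxdiv : ∀ m, idx m / 2 = m := by
      intro m
      show (if ((eqC.symm (2*m) : Ω)) ∈ T' then 2*m+1 else 2*m) / 2 = m
      split_ifs <;> omega
    have hidxspec : ∀ m, (eqC.symm (idx m) : Ω) ∉ T' := by
      intro m
      by_cases hm : ((eqC.symm (2*m) : Ω)) ∈ T'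
      · simp only [hidx, if_pos hm]
        intro hb
        have hne : ((eqC.symm (2*m) : Ω)) ≠ ((eqC.symm (2*m+1) : Ω)) := by
          intro h
          have := eqC.symm.injective (Subtype.coe_injective h)
          omega
        refine hne (hT'.1 hm hb ?_)
        rw [hpair m (2*m) (by omega), hpair m (2*m+1) (by omega)]
      · simp only [hidx, if_neg hm]
        exact hm
    have hF : Function.Injective
        (fun m => (⟨(eqC.symm (idx m) : Ω), hidxspec m⟩ : ↥(T'ᶜ))) := by
      intro a b h
      simp only [Subtype.mk.injEq] at h
      have h3 := eqC.symm.injective (Subtype.coe_injective h)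
      have := hidxdiv a
      have := hidxdiv b
      omega
    calc ℵ₀ = #ℕ := Cardinal.mk_nat.symm
      _ ≤ #(↥(T'ᶜ)) := Cardinal.mk_le_of_injective hF
  -- contract p is finite
  have hkp : contract p < ℵ₀ := by
    have hempty : {α : Ω | (p ⁻¹' {α}).Infinite} = ∅ := by
      ext α
      simp only [Set.mem_setOf_eq, Set.mem_empty_iff_false, iff_false, Set.not_infinite]
      have hsub : p ⁻¹' {α} ⊆
          (g '' (f ⁻¹' {α})) ∪ {x | ∃ hx : x ∈ C, fW (eqC ⟨x, hx⟩ / 2) = α} := by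
        intro x hx
        by_cases hy : ∃ a, g a = x
        · obtain ⟨a, rfl⟩ := hy
          exact Or.inl ⟨a, by show f a = α; rw [← hpg a]; exact hx, rfl⟩
        · have hyC : x ∈ C := hy
          exact Or.inr ⟨hyC, by rw [← hpC x hyC]; exact hx⟩
      refine Set.Finite.subset (Set.Finite.union ((fiber_finite f hcf α).image g) ?_) hsub
      by_cases hne : ∃ n0 : ℕ, fW (n0/2) = α
      · obtain ⟨n0, hn0⟩ := hne
        have hss : {x | ∃ hx : x ∈ C, fW (eqC ⟨x, hx⟩ / 2) = α} ⊆
            (fun n => (eqC.symm n : Ω)) '' (Set.Iio (2*(n0/2)+2)) := by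
          rintro x ⟨hx, hval⟩
          refine ⟨eqC ⟨x, hx⟩, ?_, by simp⟩
          have := hfWinj (hval.trans hn0.symm)
          simp only [Set.mem_Iio]
          omega
        exact Set.Finite.subset (Set.Finite.image _ (Set.finite_Iio _)) hss
      · have hemp2 : {x | ∃ hx : x ∈ C, fW (eqC ⟨x, hx⟩ / 2) = α} = ∅ := by
          ext x
          simp only [Set.mem_setOf_eq, Set.mem_empty_iff_false, iff_false]
          rintro ⟨hx, hval⟩
          exact hne ⟨eqC ⟨x, hx⟩, hval⟩
        rw [hemp2]
        exact Set.finite_empty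
    have : contract p = 0 := by rw [contract, hempty]; simp
    rw [this]
    exact aleph0_pos
  -- p ∈ S12345
  have hpS : p ∈ S12345 := by
    have hd0 : (0 : Cardinal) < defect p := lt_of_lt_of_le aleph0_pos hdp
    have hc0 : (0 : Cardinal) < collapse p := lt_of_lt_of_le aleph0_pos hcp
    exact ⟨⟨⟨⟨Or.inr hd0, Or.inl hc0⟩, Or.inr hdp⟩, Or.inl hcp⟩, hkp⟩
  -- conclude
  have hfeq : f = p * g := funext fun x => (hpg x).symm
  rw [hfeq]
  exact mul_mem (Subsemigroup.subset_closure (Set.mem_union_left _ hpS)) hgS
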